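/- Let n ≥ 1, let P(z) = ∑_{k=0}^n b_k z^k be a polynomial of degree n with b_0 ≠ 0, and let 1 ≤ m ≤ n. Then there exists a real v > 0 such that |b_0| ≤ e^{n·H((m−1)/n)} · ( max_{n−m+1 ≤ k ≤ n} |b_k| ) · max{1, v}^n, and P has at least m zeros (counted with multiplicity) whose absolute values are at least v. -/

import Mathlib

set_option maxHeartbeats 1000000

open Filter Polynomial
open scoped Classical Real

/-- The binary entropy function `H(x) = x log(1/x) + (1-x) log(1/(1-x))`
(with `H(0) = H(1) = 0`, since `Real.log 0 = 0` in Mathlib). -/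
noncomputable def entropyH (x : ℝ) : ℝ :=
  x * Real.log (1 / x) + (1 - x) * Real.log (1 / (1 - x))

namespace Stmt2Aux

lemma hockeyAux (N : ℕ) (hN : 1 ≤ N) (u : ℕ) :
    ∑ t ∈ Finset.range (u + 1), ((N - 1 + t).choose t) = (N + u).choose u := by
  induction u with
  | zero => simp
  | succ u ih =>
    rw [Finset.sum_range_succ, ih]
    have h1 : N - 1 + (u + 1) = N + u := by omega
    have h2 : N + (u + 1) = (N + u) + 1 := by omega
    rw [h1, h2, Nat.choose_succ_succ]

lemma div_coeff_bound (v : ℝ) (hv : 0 ≤ v) (r : ℂ) (hr : norm r ≤ v)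
    (Q : Polynomial ℂ) :
    ∀ (i k : ℕ), Q.natDegree < k + i →
      norm (Q.coeff k) ≤
        ∑ t ∈ Finset.range i, norm ((Q * (X - C r)).coeff (k + 1 + t)) * v ^ t := by
  intro i
  induction i with
  | zero => intro k hk; simp [Polynomial.coeff_eq_zero_of_natDegree_lt (by omega : Q.natDegree < k)]
  | succ i ih =>
    intro k hk
    by_cases hk' : Q.natDegree < k
    · rw [Polynomial.coeff_eq_zero_of_natDegree_lt hk']
      simp only [norm_zero]
      apply Finset.sum_nonneg
      intro t _
      positivity
    · have hkk : ¬ (Q.natDegree < k) := hk'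
      have key : Q.coeff k = (Q * (X - C r)).coeff (k+1) + r * Q.coeff (k+1) := by
        rw [Polynomial.coeff_mul_X_sub_C]; ring
      have h2 := ih (k+1) (by omega)
      have step1 : norm (Q.coeff k)
          ≤ norm ((Q * (X - C r)).coeff (k+1)) + norm r * norm (Q.coeff (k+1)) := by
        rw [key]
        refine (norm_add_le _ _).trans ?_
        rw [norm_mul]
      have step2 : norm r * norm (Q.coeff (k+1))
          ≤ v * (∑ t ∈ Finset.range i, norm ((Q * (X - C r)).coeff (k + 2 + t)) * v ^ t) := by
        have h3 : ∀ t ∈ Finset.range i, norm ((Q * (X - C r)).coeff (k + 1 + 1 + t)) * v ^ t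
            = norm ((Q * (X - C r)).coeff (k + 2 + t)) * v ^ t := by
          intro t _
          congr 2 <;> omega
        rw [← Finset.sum_congr rfl h3]
        exact mul_le_mul hr h2 (norm_nonneg _) hv
      have step3 : norm ((Q * (X - C r)).coeff (k+1))
          + v * (∑ t ∈ Finset.range i, norm ((Q * (X - C r)).coeff (k + 2 + t)) * v ^ t)
          = ∑ t ∈ Finset.range (i+1), norm ((Q * (X - C r)).coeff (k + 1 + t)) * v ^ t := by
        rw [Finset.sum_range_succ', Finset.mul_sum, add_comm]
        congr 1
        · apply Finset.sum_congr rfl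
          intro t _
          have h4 : k + 1 + (t + 1) = k + 2 + t := by omega
          rw [h4]
          ring
        · simp
      rw [← step3]
      exact step1.trans (by gcongr)

lemma natDegree_prod_X_sub_C_le (T : List ℂ) :
    ((T.map fun r => X - Polynomial.C r).prod).natDegree ≤ T.length := by
  refine (Polynomial.natDegree_list_prod_le _).trans ?_
  rw [List.map_map]
  have h : (T.map (Polynomial.natDegree ∘ fun r => X - Polynomial.C r)) = T.map (fun _ => 1) := by
    apply List.map_congr_left
    intro r _
    simp [Polynomial.natDegree_X_sub_C]
  rw [h]
  simp

lemma key_bound (v : ℝ) (hv : 0 ≤ v) :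
    ∀ (T : List ℂ), T ≠ [] → (∀ x ∈ T, norm x ≤ v) →
      ∀ (G : Polynomial ℂ) (D : ℕ), G.natDegree ≤ D → ∀ (j : ℕ),
      norm (G.coeff j) ≤ ∑ t ∈ Finset.range (D + 1),
        norm ((G * (T.map fun r => X - Polynomial.C r).prod).coeff (T.length + j + t)) *
          ((T.length - 1 + t).choose t) * v ^ t := by
  intro T
  induction T with
  | nil => intro h; exact absurd rfl h
  | cons r T' ih =>
    intro _ hT G D hGD j
    have hr : norm r ≤ v := hT r (by simp)
    by_cases hT' : T' = []
    · subst hT'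
      have hbase := div_coeff_bound v hv r hr G (D+1) j (by omega)
      refine (hbase.trans (le_of_eq ?_))
      simp only [List.map_cons, List.map_nil, List.prod_cons, List.prod_nil, mul_one,
        List.length_cons, List.length_nil]
      apply Finset.sum_congr rfl
      intro t _
      have h1 : j + 1 + t = 0 + 1 + j + t := by omega
      have h2 : (0 + 1 - 1 + t).choose t = 1 := by simp
      rw [h1, h2]
      push_cast
      ring
    · set f : ℂ → Polynomial ℂ := fun r => X - Polynomial.C r with hf
      set L' := T'.length with hL'
      have hL'1 : 1 ≤ L' := by
        rw [hL']
        exact List.length_pos_iff.mpr hT'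
      set Q' : Polynomial ℂ := G * (T'.map f).prod with hQ'
      set Q : Polynomial ℂ := G * ((r :: T').map f).prod with hQdef
      have hQ : Q = Q' * (X - Polynomial.C r) := by
        rw [hQdef, hQ']
        simp only [List.map_cons, List.prod_cons]
        ring
      have hdegQ' : Q'.natDegree ≤ D + L' := by
        refine Polynomial.natDegree_mul_le.trans ?_
        have hdp : ((T'.map f).prod).natDegree ≤ T'.length := natDegree_prod_X_sub_C_le T'
        omega
      have hdegQ : Q.natDegree ≤ D + L' + 1 := by
        rw [hQ]
        refine Polynomial.natDegree_mul_le.trans ?_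
        have : (X - Polynomial.C r).natDegree = 1 := Polynomial.natDegree_X_sub_C r
        omega
      set I := D + L' + 1 with hI
      set W := D + 1 + I with hW
      have step1 := ih hT' (fun x hx => hT x (by simp [hx])) G D hGD j
      have step2 : ∀ t : ℕ, norm (Q'.coeff (L' + j + t)) ≤
          ∑ s ∈ Finset.range I, norm (Q.coeff (L' + j + t + 1 + s)) * v ^ s := by
        intro t
        have := div_coeff_bound v hv r hr Q' I (L' + j + t) (by omega)
        rw [← hQ] at this
        exact this
      have hnn : ∀ (a b c : ℕ), (0:ℝ) ≤ norm (Q.coeff a) * ((L' - 1 + b).choose b) * v ^ c := by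
        intro a b c
        positivity
      calc norm (G.coeff j)
          ≤ ∑ t ∈ Finset.range (D + 1),
              norm (Q'.coeff (L' + j + t)) * ((L' - 1 + t).choose t) * v ^ t := step1
        _ ≤ ∑ t ∈ Finset.range (D + 1),
              (∑ s ∈ Finset.range I, norm (Q.coeff (L' + j + t + 1 + s)) * v ^ s)
                * ((L' - 1 + t).choose t) * v ^ t := by
            apply Finset.sum_le_sum
            intro t _
            have h := step2 t
            have hnn2 : (0:ℝ) ≤ ((L' - 1 + t).choose t : ℝ) * v ^ t := by positivity
            calc norm (Q'.coeff (L' + j + t)) * ((L' - 1 + t).choose t) * v ^ t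
                = norm (Q'.coeff (L' + j + t)) * (((L' - 1 + t).choose t) * v ^ t) := by ring
              _ ≤ (∑ s ∈ Finset.range I, norm (Q.coeff (L' + j + t + 1 + s)) * v ^ s)
                    * (((L' - 1 + t).choose t) * v ^ t) := by
                  exact mul_le_mul_of_nonneg_right h hnn2
              _ = _ := by ring
        _ = ∑ t ∈ Finset.range (D + 1), ∑ u ∈ Finset.Ico t (t + I),
              norm (Q.coeff (L' + 1 + j + u)) * ((L' - 1 + t).choose t) * v ^ u := by
            apply Finset.sum_congr rfl
            intro t _
            rw [Finset.sum_Ico_eq_sum_range]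
            simp only [Nat.add_sub_cancel_left]
            rw [Finset.sum_mul, Finset.sum_mul]
            apply Finset.sum_congr rfl
            intro s _
            have h1 : L' + 1 + j + (t + s) = L' + j + t + 1 + s := by omega
            rw [h1, pow_add]
            ring
        _ ≤ ∑ t ∈ Finset.range W, ∑ u ∈ Finset.Ico t W,
              norm (Q.coeff (L' + 1 + j + u)) * ((L' - 1 + t).choose t) * v ^ u := by
            have e1 : ∑ t ∈ Finset.range (D + 1), ∑ u ∈ Finset.Ico t (t + I),
                norm (Q.coeff (L' + 1 + j + u)) * ((L' - 1 + t).choose t) * v ^ u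
                ≤ ∑ t ∈ Finset.range (D + 1), ∑ u ∈ Finset.Ico t W,
                norm (Q.coeff (L' + 1 + j + u)) * ((L' - 1 + t).choose t) * v ^ u := by
              apply Finset.sum_le_sum
              intro t ht
              simp only [Finset.mem_range] at ht
              refine Finset.sum_le_sum_of_subset_of_nonneg
                (Finset.Ico_subset_Ico le_rfl (by omega)) (fun u _ _ => hnn _ _ _)
            have e2 : ∑ t ∈ Finset.range (D + 1), ∑ u ∈ Finset.Ico t W,
                norm (Q.coeff (L' + 1 + j + u)) * ((L' - 1 + t).choose t) * v ^ u
                ≤ ∑ t ∈ Finset.range W, ∑ u ∈ Finset.Ico t W,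
                norm (Q.coeff (L' + 1 + j + u)) * ((L' - 1 + t).choose t) * v ^ u := by
              refine Finset.sum_le_sum_of_subset_of_nonneg
                (Finset.range_subset_range.mpr (by omega)) ?_
              intro t _ _
              exact Finset.sum_nonneg (fun u _ => hnn _ _ _)
            exact e1.trans e2
        _ = ∑ u ∈ Finset.range W, ∑ t ∈ Finset.range (u + 1),
              norm (Q.coeff (L' + 1 + j + u)) * ((L' - 1 + t).choose t) * v ^ u := by
            rw [Finset.range_eq_Ico, Finset.sum_Ico_Ico_comm]
            simp only [Finset.range_eq_Ico]
        _ = ∑ u ∈ Finset.range W,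
              norm (Q.coeff (L' + 1 + j + u)) * ((L' + u).choose u) * v ^ u := by
            apply Finset.sum_congr rfl
            intro u _
            rw [← Finset.sum_mul, ← Finset.mul_sum]
            congr 1
            rw [← Nat.cast_sum]
            rw [hockeyAux L' hL'1 u]
        _ = ∑ u ∈ Finset.range (D + 1),
              norm (Q.coeff (L' + 1 + j + u)) * ((L' + u).choose u) * v ^ u := by
            symm
            apply Finset.sum_subset (Finset.range_subset_range.mpr (by omega))
            intro u hu hnu
            simp only [Finset.mem_range] at hu hnu
            have : Q.coeff (L' + 1 + j + u) = 0 :=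
              Polynomial.coeff_eq_zero_of_natDegree_lt (by omega)
            simp [this]
        _ = _ := by
            apply Finset.sum_congr rfl
            intro u _
            have h1 : (r :: T').length + j + u = L' + 1 + j + u := by
              simp [hL']
            have h2 : (r :: T').length - 1 + u = L' + u := by
              simp [hL']
            rw [h1, h2]

lemma choose_le_exp_entropy (n k : ℕ) (hn : 1 ≤ n) (hk : k ≤ n) :
    (n.choose k : ℝ) ≤ Real.exp ((n : ℝ) * entropyH ((k : ℝ) / (n : ℝ))) := by
  have hn' : (0:ℝ) < n := by exact_mod_cast hn
  rcases Nat.eq_zero_or_pos k with rfl | hk0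
  · simp [entropyH]
  rcases eq_or_lt_of_le hk with rfl | hkn
  · simp [entropyH, div_self hn'.ne']
  · set p : ℝ := (k : ℝ) / n with hp
    have hp0 : 0 < p := by positivity
    have hp1 : p < 1 := by
      rw [hp, div_lt_one hn']
      exact_mod_cast hkn
    have h1p : 0 < 1 - p := by linarith
    have hnp : (n : ℝ) * p = k := by
      rw [hp]; field_simp
    have hn1p : (n : ℝ) * (1 - p) = ((n - k : ℕ) : ℝ) := by
      rw [Nat.cast_sub hk]; rw [hp]; field_simp
    have key : (n.choose k : ℝ) * (p ^ k * (1 - p) ^ (n - k)) ≤ 1 := by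
      have hb : (p + (1 - p)) ^ n
          = ∑ i ∈ Finset.range (n + 1), p ^ i * (1 - p) ^ (n - i) * (n.choose i) :=
        add_pow p (1 - p) n
      have hone : ∑ i ∈ Finset.range (n + 1), p ^ i * (1 - p) ^ (n - i) * ((n.choose i : ℝ)) = 1 := by
        rw [← hb]; norm_num
      have hmem : k ∈ Finset.range (n + 1) := Finset.mem_range.mpr (by omega)
      have hsingle := Finset.single_le_sum
        (f := fun i => p ^ i * (1 - p) ^ (n - i) * ((n.choose i : ℝ)))
        (fun i _ => by positivity) hmem
      calc (n.choose k : ℝ) * (p ^ k * (1 - p) ^ (n - k))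
          = p ^ k * (1 - p) ^ (n - k) * (n.choose k) := by ring
        _ ≤ ∑ i ∈ Finset.range (n + 1), p ^ i * (1 - p) ^ (n - i) * ((n.choose i : ℝ)) := hsingle
        _ = 1 := hone
    have hexp : Real.exp ((n : ℝ) * entropyH p) = (p ^ k * (1 - p) ^ (n - k))⁻¹ := by
      unfold entropyH
      rw [mul_add, ← mul_assoc, ← mul_assoc, hnp, hn1p]
      rw [Real.exp_add]
      rw [Real.exp_nat_mul, Real.exp_nat_mul]
      rw [Real.exp_log (by positivity : (0:ℝ) < 1 / p),
        Real.exp_log (by positivity : (0:ℝ) < 1 / (1 - p))]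
      rw [one_div, one_div, inv_pow, inv_pow, mul_inv]
    have hx : (0:ℝ) < p ^ k * (1 - p) ^ (n - k) := by positivity
    rw [hexp, ← one_div, le_div_iff₀ hx]
    exact key

lemma abs_coeff_zero_prod (v : ℝ) (hv : 0 ≤ v) :
    ∀ (T : List ℂ), (∀ x ∈ T, norm x ≤ v) →
      norm (((T.map fun r => X - Polynomial.C r).prod).coeff 0) ≤ v ^ T.length := by
  intro T
  induction T with
  | nil => simp
  | cons r T ih =>
    intro h
    simp only [List.map_cons, List.prod_cons, List.length_cons]
    rw [Polynomial.mul_coeff_zero, norm_mul]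
    have h1 : norm ((X - Polynomial.C r).coeff 0) ≤ v := by
      simp only [Polynomial.coeff_sub, Polynomial.coeff_X_zero, Polynomial.coeff_C_zero,
        zero_sub, norm_neg]
      exact h r (by simp)
    have h2 := ih (fun x hx => h x (by simp [hx]))
    rw [pow_succ']
    exact mul_le_mul h1 h2 (norm_nonneg _) hv

end Stmt2Aux

open Stmt2Aux in
/-- Lemma 2.3, a consequence of Van Vleck's bounds. For any polynomial
`P(z) = ∑_{k=0}^n b_k z^k` of degree `n ≥ 1` with `b_0 ≠ 0` and any `1 ≤ m ≤ n`, there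
is a radius `v > 0` such that
`|b_0| ≤ e^{n H((m-1)/n)} · (max_{n-m+1 ≤ k ≤ n} |b_k|) · max{1, v}^n`
and `P` has at least `m` zeros (with multiplicity) of absolute value at least `v`. -/
theorem stmt_2 (n m : ℕ) (P : Polynomial ℂ) (hn : 1 ≤ n) (hdeg : P.natDegree = n)
    (hb0 : P.coeff 0 ≠ 0) (hm1 : 1 ≤ m) (hmn : m ≤ n) :
    ∃ v : ℝ, 0 < v ∧
      ‖P.coeff 0‖ ≤
        Real.exp ((n : ℝ) * entropyH (((m : ℝ) - 1) / (n : ℝ))) *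
          ((Finset.Icc (n - m + 1) n).sup' (Finset.nonempty_Icc.mpr (by omega))
            fun k => ‖P.coeff k‖) *
          max 1 v ^ n ∧
      m ≤ (P.roots.filter fun w => v ≤ ‖w‖).card := by
  classical
  have hP0 : P ≠ 0 := fun h => hb0 (by simp [h])
  have hsplits : P.Splits := IsAlgClosed.splits P
  have hcard : Multiset.card P.roots = n := by
    rw [← hdeg]
    exact (Polynomial.splits_iff_card_roots.mp hsplits)
  have hprodP : P = Polynomial.C P.leadingCoeff * (P.roots.map fun a => X - Polynomial.C a).prod :=
    hsplits.eq_prod_roots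
  have hrne : ∀ r ∈ P.roots, r ≠ 0 := by
    intro r hr h0
    apply hb0
    rw [Polynomial.coeff_zero_eq_eval_zero]
    have hroot := Polynomial.isRoot_of_mem_roots hr
    rwa [h0] at hroot
  set rel : ℂ → ℂ → Prop := fun a b => norm b ≤ norm a with hrel
  haveI : IsTotal ℂ rel := ⟨fun a b => le_total _ _⟩
  haveI : IsTrans ℂ rel := ⟨fun a b c h1 h2 => le_trans h2 h1⟩
  haveI : IsRefl ℂ rel := ⟨fun a => le_refl _⟩
  obtain ⟨L, hLdef⟩ : ∃ L : List ℂ, L = List.insertionSort rel P.roots.toList := ⟨_, rfl⟩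
  have hperm : List.Perm L P.roots.toList := hLdef ▸ List.perm_insertionSort rel _
  have hLmul : (Multiset.ofList L) = P.roots := by
    rw [Multiset.coe_eq_coe.mpr hperm, Multiset.coe_toList]
  have hlen : L.length = n := by
    rw [hperm.length_eq, Multiset.length_toList, hcard]
  have hsorted : L.Pairwise rel := hLdef ▸ List.pairwise_insertionSort rel _
  have hmono : ∀ i j : Fin L.length, i ≤ j → norm (L.get j) ≤ norm (L.get i) :=
    fun i j hij => hsorted.rel_get_of_le hij
  have hidx : m - 1 < L.length := by omega
  obtain ⟨v, hvdef⟩ : ∃ v : ℝ, v = norm (L.get ⟨m - 1, hidx⟩) := ⟨_, rfl⟩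
  have hLroots : ∀ x ∈ L, x ∈ P.roots := by
    intro x hx
    rw [← hLmul]
    exact Multiset.mem_coe.mpr hx
  have hv0 : 0 < v := by
    rw [hvdef]
    have hmem : L.get ⟨m - 1, hidx⟩ ∈ L := List.get_mem L ⟨m - 1, hidx⟩
    exact norm_pos_iff.mpr (hrne _ (hLroots _ hmem))
  refine ⟨v, hv0, ?_, ?_⟩
  · -- the coefficient bound
    obtain ⟨A, hAdef⟩ : ∃ A : List ℂ, A = L.take (m - 1) := ⟨_, rfl⟩
    obtain ⟨T, hTdef⟩ : ∃ T : List ℂ, T = L.drop (m - 1) := ⟨_, rfl⟩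
    have hAlen : A.length = m - 1 := by
      rw [hAdef, List.length_take, hlen]
      omega
    have hTlen : T.length = n - m + 1 := by
      rw [hTdef, List.length_drop, hlen]
      omega
    have hTne : T ≠ [] := by
      apply List.length_pos_iff.mp
      omega
    have hTv : ∀ x ∈ T, norm x ≤ v := by
      intro x hx
      rw [hTdef] at hx
      obtain ⟨i, hi, hxeq⟩ := List.mem_iff_getElem.mp hx
      have hi2 : m - 1 + i < L.length := by
        rw [List.length_drop] at hi
        omega
      have hxeq2 : L.get ⟨m - 1 + i, hi2⟩ = x := by
        rw [← hxeq]
        simp [List.getElem_drop]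
      have := hmono ⟨m - 1, hidx⟩ ⟨m - 1 + i, hi2⟩ (by simp)
      rw [hxeq2] at this
      rw [hvdef]
      exact this
    have hsplit : (P.roots.map fun a => X - Polynomial.C a).prod
        = (A.map fun a => X - Polynomial.C a).prod * (T.map fun a => X - Polynomial.C a).prod := by
      rw [← hLmul]
      have hL2 : (Multiset.ofList L) = Multiset.ofList (A ++ T) := by
        rw [hAdef, hTdef, List.take_append_drop]
      rw [hL2]
      rw [Multiset.map_coe, Multiset.prod_coe]
      rw [List.map_append, List.prod_append]
    obtain ⟨G, hGdef⟩ : ∃ G : Polynomial ℂ,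
        G = Polynomial.C P.leadingCoeff * (A.map fun a => X - Polynomial.C a).prod := ⟨_, rfl⟩
    have hPG : P = G * (T.map fun a => X - Polynomial.C a).prod := by
      rw [hGdef, mul_assoc, ← hsplit, ← hprodP]
    have hGdeg : G.natDegree ≤ m - 1 := by
      rw [hGdef]
      refine Polynomial.natDegree_mul_le.trans ?_
      have h1 := natDegree_prod_X_sub_C_le A
      simp only [Polynomial.natDegree_C]
      omega
    have hkey := key_bound v hv0.le T hTne hTv G (m - 1) hGdeg 0
    rw [← hPG] at hkey
    obtain ⟨M, hMdef⟩ : ∃ M : ℝ, M = (Finset.Icc (n - m + 1) n).sup'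
        (Finset.nonempty_Icc.mpr (by omega)) (fun k => norm (P.coeff k)) := ⟨_, rfl⟩
    have hM : ∀ k, n - m + 1 ≤ k → k ≤ n → norm (P.coeff k) ≤ M := by
      intro k h1 h2
      rw [hMdef]
      exact Finset.le_sup' (f := fun k => norm (P.coeff k)) (Finset.mem_Icc.mpr ⟨h1, h2⟩)
    have hM0 : 0 ≤ M :=
      le_trans (norm_nonneg _) (hM n (by omega) le_rfl)
    obtain ⟨u, hudef⟩ : ∃ u : ℝ, u = max 1 v := ⟨_, rfl⟩
    have hu1 : (1:ℝ) ≤ u := hudef ▸ le_max_left _ _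
    have huv : v ≤ u := hudef ▸ le_max_right _ _
    have hu0 : (0:ℝ) < u := lt_of_lt_of_le one_pos hu1
    have hbound1 : norm (G.coeff 0) ≤ M * u ^ (m - 1) * (n.choose (m - 1)) := by
      refine hkey.trans ?_
      have hterm : ∀ t ∈ Finset.range (m - 1 + 1),
          norm (P.coeff (T.length + 0 + t)) * ((T.length - 1 + t).choose t) * v ^ t
          ≤ (M * u ^ (m - 1)) * ((n - m + t).choose t) := by
        intro t ht
        simp only [Finset.mem_range] at ht
        have hc : norm (P.coeff (T.length + 0 + t)) ≤ M := by
          apply hM <;> omega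
        have hch : (T.length - 1 + t) = n - m + t := by omega
        have hpow : v ^ t ≤ u ^ (m - 1) := by
          calc v ^ t ≤ u ^ t := pow_le_pow_left₀ hv0.le huv t
            _ ≤ u ^ (m - 1) := pow_le_pow_right₀ hu1 (by omega)
        rw [hch]
        calc norm (P.coeff (T.length + 0 + t)) * ((n - m + t).choose t) * v ^ t
            ≤ (M * ((n - m + t).choose t)) * u ^ (m - 1) :=
              mul_le_mul (mul_le_mul_of_nonneg_right hc (Nat.cast_nonneg _)) hpow
                (pow_nonneg hv0.le t)
                (mul_nonneg hM0 (Nat.cast_nonneg _))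
          _ = (M * u ^ (m - 1)) * ((n - m + t).choose t) := by ring
      refine (Finset.sum_le_sum hterm).trans (le_of_eq ?_)
      rw [← Finset.mul_sum, ← Nat.cast_sum]
      have hsum : ∑ t ∈ Finset.range (m - 1 + 1), ((n - m + t).choose t) = n.choose (m - 1) := by
        have hhs := hockeyAux (n - m + 1) (by omega) (m - 1)
        have he : ∀ t, (n - m + 1 - 1 + t) = n - m + t := by intro t; omega
        simp only [he] at hhs
        rw [hhs]
        congr 1
        omega
      rw [hsum]
    have hbound2 : norm (((T.map fun a => X - Polynomial.C a).prod).coeff 0)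
        ≤ v ^ (n - m + 1) := by
      rw [← hTlen]
      exact abs_coeff_zero_prod v hv0.le T hTv
    have hGnn : (0:ℝ) ≤ M * u ^ (m - 1) * (n.choose (m - 1)) :=
      mul_nonneg (mul_nonneg hM0 (pow_nonneg hu0.le _)) (Nat.cast_nonneg _)
    have heq : norm (P.coeff 0)
        = norm (G.coeff 0)
          * norm (((T.map fun a => X - Polynomial.C a).prod).coeff 0) := by
      rw [hPG, Polynomial.mul_coeff_zero, norm_mul]
    have h1 : norm (G.coeff 0)
          * norm (((T.map fun a => X - Polynomial.C a).prod).coeff 0)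
        ≤ (M * u ^ (m - 1) * (n.choose (m - 1))) * v ^ (n - m + 1) :=
      mul_le_mul hbound1 hbound2 (norm_nonneg _) hGnn
    have h2 : (M * u ^ (m - 1) * (n.choose (m - 1))) * v ^ (n - m + 1)
        ≤ (M * u ^ (m - 1) * (n.choose (m - 1))) * u ^ (n - m + 1) :=
      mul_le_mul_of_nonneg_left (pow_le_pow_left₀ hv0.le huv _) hGnn
    have h3 : (M * u ^ (m - 1) * (n.choose (m - 1))) * u ^ (n - m + 1)
        = (n.choose (m - 1) : ℝ) * M * u ^ n := by
      have hpow : u ^ (m - 1) * u ^ (n - m + 1) = u ^ n := by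
        rw [← pow_add]
        congr 1
        omega
      rw [← hpow]
      ring
    have hfinal : norm (P.coeff 0) ≤ (n.choose (m - 1) : ℝ) * M * u ^ n := by
      rw [heq]
      exact (h1.trans h2).trans_eq h3
    have hentropy : (n.choose (m - 1) : ℝ)
        ≤ Real.exp ((n : ℝ) * entropyH (((m : ℝ) - 1) / (n : ℝ))) := by
      have hce := choose_le_exp_entropy n (m - 1) hn (by omega)
      have hc : (((m - 1 : ℕ) : ℝ)) = (m : ℝ) - 1 := by
        push_cast [Nat.cast_sub hm1]
        ring
      rwa [hc] at hce
    have hstep : (n.choose (m - 1) : ℝ) * M * u ^ n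
        ≤ Real.exp ((n : ℝ) * entropyH (((m : ℝ) - 1) / (n : ℝ))) * M * u ^ n :=
      mul_le_mul_of_nonneg_right (mul_le_mul_of_nonneg_right hentropy hM0)
        (pow_nonneg hu0.le n)
    have hgoal := hfinal.trans hstep
    rw [hudef, hMdef] at hgoal
    exact hgoal
  · -- the root count
    have hTake : ∀ x ∈ L.take m, v ≤ norm x := by
      intro x hx
      obtain ⟨i, hi, hxeq⟩ := List.mem_iff_getElem.mp hx
      have hilen : i < m := by
        rw [List.length_take] at hi
        omega
      have hi2 : i < L.length := by
        rw [List.length_take] at hi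
        omega
      have hxeq2 : L.get ⟨i, hi2⟩ = x := by
        rw [← hxeq]
        simp [List.getElem_take]
      have := hmono ⟨i, hi2⟩ ⟨m - 1, hidx⟩ (by
        simp only [Fin.mk_le_mk]
        omega)
      rw [hxeq2] at this
      rw [hvdef]
      exact this
    have hmlen : m ≤ L.length := by omega
    calc m = (L.take m).length := by rw [List.length_take]; omega
      _ = Multiset.card (Multiset.ofList (L.take m)) := by rw [Multiset.coe_card]
      _ = Multiset.card (Multiset.filter (fun w => v ≤ norm w)
            (Multiset.ofList (L.take m))) := by
          rw [Multiset.filter_eq_self.mpr]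
          intro a ha
          exact hTake a ha
      _ ≤ Multiset.card (Multiset.filter (fun w => v ≤ norm w)
            (Multiset.ofList (L.take m) + Multiset.ofList (L.drop m))) := by
          rw [Multiset.filter_add, Multiset.card_add]
          exact Nat.le_add_right _ _
      _ = Multiset.card (Multiset.filter (fun w => v ≤ norm w) P.roots) := by
          congr 1
          rw [Multiset.coe_add, List.take_append_drop]
          rw [hLmul]
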